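/- arXiv:1707.05126 — 2 statements merged into one kernel-verified Lean document; each statement's English description precedes it below -/
import Mathlib

section
/- Let λ ≥ 1, μ > 0.462, α, β ∈ [0,1). If (1-β)α(e^{1/μ}-1) ≤ 1-α, then Σ_{n≥2} (n-α-(n-1)αβ) · [Γ(μ)/Γ(λ(n-1)+μ)] · e^{-1/μ}/n! ≤ 1-α, i.e., the function Ĝ_{λ,μ}(z) = z - Σ_{n≥2} [Γ(μ)/Γ(λ(n-1)+μ)] e^{-1/μ}/n! · z^n belongs to TS*(α,β). -/
open Real
set_option maxHeartbeats 1000000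

lemma gamma_ge_one {t : ℝ} (h : 2 ≤ t) : 1 ≤ Real.Gamma t := by
  rcases eq_or_lt_of_le h with h2 | h2
  · rw [← h2, Real.Gamma_two]
  · have hc := Real.convexOn_Gamma
    have h1 : (1:ℝ) ∈ Set.Ioi (0:ℝ) := by norm_num
    have ht : t ∈ Set.Ioi (0:ℝ) := by simp only [Set.mem_Ioi]; linarith
    have ht1 : t - 1 ≠ 0 := by linarith
    set a : ℝ := (t-2)/(t-1) with ha
    set b : ℝ := 1/(t-1) with hb
    have hab : a + b = 1 := by rw [ha, hb, ← add_div, div_eq_one_iff_eq ht1]; ring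
    have ha0 : 0 ≤ a := by apply div_nonneg <;> linarith
    have hb0 : 0 ≤ b := by apply div_nonneg <;> linarith
    have key := hc.2 h1 ht ha0 hb0 hab
    have hpt : a • (1:ℝ) + b • t = 2 := by
      simp only [smul_eq_mul, mul_one]
      rw [ha, hb]; field_simp; ring
    rw [hpt, Real.Gamma_two, Real.Gamma_one] at key
    simp only [smul_eq_mul, mul_one] at key
    have hb' : 0 < b := by rw [hb]; positivity
    nlinarith

lemma gamma_mono2 {a b : ℝ} (ha : 2 ≤ a) (hab : a ≤ b) : Real.Gamma a ≤ Real.Gamma b := by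
  rcases eq_or_lt_of_le hab with h | h
  · rw [h]
  · have hc := Real.convexOn_Gamma
    have h2 : (2:ℝ) ∈ Set.Ioi (0:ℝ) := by norm_num
    have hb' : b ∈ Set.Ioi (0:ℝ) := by simp only [Set.mem_Ioi]; linarith
    have hb2 : b - 2 ≠ 0 := by linarith
    set u : ℝ := (b-a)/(b-2) with hu
    set v : ℝ := (a-2)/(b-2) with hv
    have huv : u + v = 1 := by rw [hu, hv, ← add_div, div_eq_one_iff_eq hb2]; ring
    have hu0 : 0 ≤ u := by apply div_nonneg <;> linarith
    have hv0 : 0 ≤ v := by apply div_nonneg <;> linarith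
    have key := hc.2 h2 hb' hu0 hv0 huv
    have hpt : u • (2:ℝ) + v • b = a := by
      simp only [smul_eq_mul]; rw [hu, hv]; field_simp; ring
    rw [hpt, Real.Gamma_two] at key
    simp only [smul_eq_mul, mul_one] at key
    have h1b := gamma_ge_one (le_trans ha hab)
    nlinarith

lemma gamma_le_one {t : ℝ} (h1 : 1 ≤ t) (h2 : t ≤ 2) : Real.Gamma t ≤ 1 := by
  have hc := Real.convexOn_Gamma
  have ha : (1:ℝ) ∈ Set.Ioi (0:ℝ) := by norm_num
  have hb : (2:ℝ) ∈ Set.Ioi (0:ℝ) := by norm_num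
  have key := hc.2 ha hb (by linarith : (0:ℝ) ≤ 2 - t) (by linarith : (0:ℝ) ≤ t - 1) (by ring)
  have hpt : (2-t) • (1:ℝ) + (t-1) • (2:ℝ) = t := by simp only [smul_eq_mul]; ring
  rw [hpt, Real.Gamma_two, Real.Gamma_one] at key
  simp only [smul_eq_mul, mul_one] at key
  linarith

lemma gamma_three_halves : Real.Gamma (3/2) = Real.sqrt π / 2 := by
  have h : (3/2:ℝ) = 1/2 + 1 := by norm_num
  rw [h, Real.Gamma_add_one (by norm_num), Real.Gamma_one_half_eq]; ring

lemma gamma_ge_pi4 {t : ℝ} (h1 : 1.462 ≤ t) (h2 : t ≤ 2) : π/4 ≤ Real.Gamma t := by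
  have hc := Real.convexOn_log_Gamma
  set f : ℝ → ℝ := Real.log ∘ Real.Gamma with hf
  set L : ℝ := Real.log (Real.sqrt π / 2) with hL
  have hsp : Real.sqrt π / 2 < 1 := by
    rw [div_lt_one (by norm_num)]
    have h4 : Real.sqrt 4 = 2 := by
      rw [show (4:ℝ) = 2^2 by norm_num, Real.sqrt_sq (by norm_num : (0:ℝ) ≤ 2)]
    have : Real.sqrt π < Real.sqrt 4 := by
      apply Real.sqrt_lt_sqrt pi_pos.le
      nlinarith [pi_lt_d2]
    rwa [h4] at this
  have hsp0 : 0 < Real.sqrt π / 2 := by positivity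
  have hLneg : L ≤ 0 := le_of_lt (Real.log_neg hsp0 hsp)
  have hf32 : f (3/2) = L := by
    rw [hf]; simp only [Function.comp_apply]; rw [gamma_three_halves]
  have hf1 : f 1 = 0 := by
    rw [hf]; simp only [Function.comp_apply]; rw [Real.Gamma_one, Real.log_one]
  have hf2 : f 2 = 0 := by
    rw [hf]; simp only [Function.comp_apply]; rw [Real.Gamma_two, Real.log_one]
  have key : ∃ κ : ℝ, 0 ≤ κ ∧ κ ≤ 2 ∧ κ * L ≤ f t := by
    rcases lt_trichotomy t (3/2) with hlt | heq | hgt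
    · have hs := hc.slope_mono_adjacent (x := t) (y := 3/2) (z := 2)
        (by simp only [Set.mem_Ioi]; linarith) (by norm_num) hlt (by norm_num)
      rw [hf32, hf2] at hs
      refine ⟨4 - 2*t, by linarith, by linarith, ?_⟩
      have h32t : (0:ℝ) < 3/2 - t := by linarith
      rw [div_le_div_iff₀ h32t (by norm_num : (0:ℝ) < 2 - 3/2)] at hs
      nlinarith
    · refine ⟨1, by norm_num, by norm_num, by rw [heq, hf32]; linarith⟩
    · have hs := hc.slope_mono_adjacent (x := 1) (y := 3/2) (z := t)
        (by norm_num) (by simp only [Set.mem_Ioi]; linarith) (by norm_num) hgt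
      rw [hf32, hf1] at hs
      refine ⟨2*t - 2, by linarith, by linarith, ?_⟩
      have ht32 : (0:ℝ) < t - 3/2 := by linarith
      rw [div_le_div_iff₀ (by norm_num : (0:ℝ) < 3/2 - 1) ht32] at hs
      nlinarith
  obtain ⟨κ, hκ0, hκ2, hκ⟩ := key
  have h2L : 2 * L ≤ f t := le_trans (by nlinarith) hκ
  have hπ4 : Real.log (π/4) = 2 * L := by
    have hsq : (Real.sqrt π / 2)^2 = π/4 := by
      rw [div_pow, Real.sq_sqrt pi_pos.le]; norm_num
    rw [← hsq, sq, Real.log_mul hsp0.ne' hsp0.ne']; rw [hL]; ring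
  have hpos : 0 < Real.Gamma t := Real.Gamma_pos_of_pos (by linarith)
  have hlog : Real.log (π/4) ≤ Real.log (Real.Gamma t) := by rw [hπ4]; exact h2L
  calc π/4 = Real.exp (Real.log (π/4)) := by rw [Real.exp_log (by positivity)]
    _ ≤ Real.exp (Real.log (Real.Gamma t)) := Real.exp_le_exp.mpr hlog
    _ = Real.Gamma t := Real.exp_log hpos

lemma gamma_prod {μ : ℝ} (hμ : 0 < μ) (k : ℕ) : μ^k * Real.Gamma μ ≤ Real.Gamma (μ + k) := by
  induction k with
  | zero => simp
  | succ n ih =>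
    have hμn : (0:ℝ) < μ + n := by positivity
    have heq : μ + ((n+1 : ℕ) : ℝ) = (μ + n) + 1 := by push_cast; ring
    rw [heq, Real.Gamma_add_one hμn.ne']
    have hΓ : 0 < Real.Gamma (μ + n) := Real.Gamma_pos_of_pos hμn
    calc μ^(n+1) * Real.Gamma μ = μ * (μ^n * Real.Gamma μ) := by ring
      _ ≤ μ * Real.Gamma (μ + n) := by
          apply mul_le_mul_of_nonneg_left ih hμ.le
      _ ≤ (μ + n) * Real.Gamma (μ + n) := by
          apply mul_le_mul_of_nonneg_right _ hΓ.le
          simp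

lemma gamma_prod2 {μ : ℝ} (hμ : 0.462 < μ) (k : ℕ) :
    μ * (1.462:ℝ)^k * Real.Gamma μ ≤ Real.Gamma (μ + ((k:ℝ) + 1)) := by
  have hμ0 : 0 < μ := lt_trans (by norm_num) hμ
  induction k with
  | zero =>
    simp only [Nat.cast_zero, pow_zero, mul_one, zero_add]
    rw [Real.Gamma_add_one hμ0.ne']
  | succ n ih =>
    have hμn : (0:ℝ) < μ + ((n:ℝ) + 1) := by positivity
    have hΓ : 0 < Real.Gamma (μ + ((n:ℝ)+1)) := Real.Gamma_pos_of_pos hμn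
    have heq : μ + (((n+1 : ℕ):ℝ) + 1) = (μ + ((n:ℝ)+1)) + 1 := by push_cast; ring
    rw [heq, Real.Gamma_add_one hμn.ne']
    have h146 : (1.462:ℝ) ≤ μ + ((n:ℝ)+1) := by
      have : (0:ℝ) ≤ (n:ℝ) := Nat.cast_nonneg n
      norm_num; linarith
    calc μ * (1.462:ℝ)^(n+1) * Real.Gamma μ
        = (1.462:ℝ) * (μ * (1.462:ℝ)^n * Real.Gamma μ) := by ring
      _ ≤ (1.462:ℝ) * Real.Gamma (μ + ((n:ℝ)+1)) := by
          apply mul_le_mul_of_nonneg_left ih (by norm_num)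
      _ ≤ (μ + ((n:ℝ)+1)) * Real.Gamma (μ + ((n:ℝ)+1)) := by
          apply mul_le_mul_of_nonneg_right _ hΓ.le
          norm_num at h146 ⊢; linarith

lemma two_mul_three_pow_le_factorial (m : ℕ) : 2 * 3^m ≤ Nat.factorial (m+2) := by
  induction m with
  | zero => simp [Nat.factorial]
  | succ k ih =>
    calc 2 * 3^(k+1) = 3 * (2 * 3^k) := by ring
      _ ≤ 3 * Nat.factorial (k+2) := by omega
      _ ≤ (k+3) * Nat.factorial (k+2) := by
          apply Nat.mul_le_mul_right; omega
      _ = Nat.factorial (k+3) := (Nat.factorial_succ (k+2)).symm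

lemma term_bound {C A r ρ ex : ℝ} (n : ℕ) (hC0 : 0 ≤ C) (hC : C ≤ ((n:ℝ)+2)*A)
    (hr0 : 0 ≤ r) (hr : r ≤ ρ) (hex : 0 ≤ ex) (hA : 0 ≤ A) :
    C * r * ex / (Nat.factorial (n+2) : ℝ) ≤ A * ex * ρ / (Nat.factorial (n+1) : ℝ) := by
  have hfp1 : (0:ℝ) < (Nat.factorial (n+1) : ℝ) := by
    exact_mod_cast Nat.factorial_pos (n+1)
  have hfp2 : (0:ℝ) < (Nat.factorial (n+2) : ℝ) := by
    exact_mod_cast Nat.factorial_pos (n+2)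
  have hfact : ((Nat.factorial (n+2) : ℝ)) = ((n:ℝ)+2) * (Nat.factorial (n+1) : ℝ) := by
    rw [show n+2 = (n+1)+1 from rfl, Nat.factorial_succ]; push_cast; ring
  rw [div_le_div_iff₀ hfp2 hfp1, hfact]
  have h1 : C * r * ex ≤ (((n:ℝ)+2)*A) * ρ * ex := by
    apply mul_le_mul_of_nonneg_right _ hex
    apply mul_le_mul hC hr hr0
    positivity
  nlinarith [mul_nonneg (mul_nonneg (mul_nonneg hC0 hr0) hex) hfp1.le]

theorem stmt17 (lam μ α β : ℝ) (hlam : 1 ≤ lam) (hμ : 0.462 < μ)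
    (hα0 : 0 ≤ α) (hα1 : α < 1) (hβ0 : 0 ≤ β) (hβ1 : β < 1)
    (hcond : (1 - β) * α * (Real.exp (1 / μ) - 1) ≤ 1 - α) :
    Summable (fun n : ℕ =>
      (((n : ℝ) + 2) - α - ((n : ℝ) + 1) * α * β) *
        (Real.Gamma μ / Real.Gamma (lam * ((n : ℝ) + 1) + μ)) * Real.exp (-1 / μ) /
        (Nat.factorial (n + 2) : ℝ)) ∧
    ∑' n : ℕ,
      (((n : ℝ) + 2) - α - ((n : ℝ) + 1) * α * β) *
        (Real.Gamma μ / Real.Gamma (lam * ((n : ℝ) + 1) + μ)) * Real.exp (-1 / μ) /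
        (Nat.factorial (n + 2) : ℝ) ≤ 1 - α := by
  have hμ0 : 0 < μ := lt_trans (by norm_num) hμ
  set x : ℝ := 1/μ with hxdef
  have hx0 : 0 < x := by rw [hxdef]; positivity
  have harg : (-1:ℝ)/μ = -x := by rw [hxdef]; ring
  set A : ℝ := 1 - α*β with hAdef
  set B : ℝ := α*(1-β) with hBdef
  have hB0 : 0 ≤ B := by rw [hBdef]; apply mul_nonneg hα0; linarith
  have hAB : A - B = 1 - α := by rw [hAdef, hBdef]; ring
  have hA0 : 0 < A := by rw [hAdef]; nlinarith
  have hBA : B * Real.exp x ≤ A := by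
    rw [hBdef, hAdef, hxdef]
    nlinarith [hcond]
  have hΓμ : 0 < Real.Gamma μ := Real.Gamma_pos_of_pos hμ0
  have hbig_pos : ∀ n : ℕ, 0 < Real.Gamma (lam * ((n:ℝ) + 1) + μ) := by
    intro n
    apply Real.Gamma_pos_of_pos
    have h1 : (0:ℝ) ≤ (n:ℝ) := Nat.cast_nonneg n
    nlinarith
  have hr_pos : ∀ n : ℕ, 0 < Real.Gamma μ / Real.Gamma (lam * ((n:ℝ) + 1) + μ) := by
    intro n; exact div_pos hΓμ (hbig_pos n)
  have hC0 : ∀ n : ℕ, 0 ≤ (((n:ℝ) + 2) - α - ((n:ℝ) + 1) * α * β) := by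
    intro n
    have h1 : (0:ℝ) ≤ (n:ℝ) := Nat.cast_nonneg n
    nlinarith [mul_nonneg hα0 hβ0]
  have hCle : ∀ n : ℕ, (((n:ℝ) + 2) - α - ((n:ℝ) + 1) * α * β) ≤ ((n:ℝ)+2) * A := by
    intro n
    have h1 : (0:ℝ) ≤ (n:ℝ) := Nat.cast_nonneg n
    rw [hAdef]; nlinarith [mul_nonneg hα0 (by linarith : (0:ℝ) ≤ 1 - β)]
  have hF_nonneg : ∀ n : ℕ, 0 ≤
      (((n : ℝ) + 2) - α - ((n : ℝ) + 1) * α * β) *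
        (Real.Gamma μ / Real.Gamma (lam * ((n : ℝ) + 1) + μ)) * Real.exp (-1 / μ) /
        (Nat.factorial (n + 2) : ℝ) := by
    intro n
    have hfp : (0:ℝ) < (Nat.factorial (n+2) : ℝ) := by exact_mod_cast Nat.factorial_pos (n+2)
    apply div_nonneg _ hfp.le
    apply mul_nonneg (mul_nonneg (hC0 n) (hr_pos n).le) (Real.exp_pos _).le
  -- general Gamma ratio bound for 2 ≤ μ + (n+1)
  have hrx_gen : ∀ n : ℕ, 2 ≤ μ + ((n:ℝ)+1) →
      Real.Gamma μ / Real.Gamma (lam * ((n:ℝ) + 1) + μ) ≤ x^(n+1) := by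
    intro n h2
    have hn0 : (0:ℝ) ≤ (n:ℝ) := Nat.cast_nonneg n
    have hmono : Real.Gamma (μ + ((n:ℝ)+1)) ≤ Real.Gamma (lam * ((n:ℝ) + 1) + μ) := by
      apply gamma_mono2 h2
      nlinarith
    have hprod := gamma_prod hμ0 (n+1)
    push_cast at hprod
    have hkey : μ^(n+1) * Real.Gamma μ ≤ Real.Gamma (lam * ((n:ℝ) + 1) + μ) :=
      le_trans hprod hmono
    rw [div_le_iff₀ (hbig_pos n)]
    have hxpow : x^(n+1) = (μ^(n+1))⁻¹ := by rw [hxdef, one_div, inv_pow]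
    rw [hxpow, inv_mul_eq_div, le_div_iff₀ (pow_pos hμ0 (n+1))]
    nlinarith
  -- Case split
  by_cases hgood : 1 ≤ μ ∨ 2 ≤ lam + μ
  · -- good case: r n ≤ x^(n+1) for all n
    have hrx : ∀ n : ℕ, Real.Gamma μ / Real.Gamma (lam * ((n:ℝ) + 1) + μ) ≤ x^(n+1) := by
      intro n
      match n with
      | Nat.succ m =>
        apply hrx_gen
        have : (0:ℝ) ≤ (m:ℝ) := Nat.cast_nonneg m
        push_cast
        linarith
      | 0 =>
        by_cases h1μ : 1 ≤ μ
        · apply hrx_gen; norm_num; linarith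
        · have h2lm : 2 ≤ lam + μ := hgood.resolve_left h1μ
          push_neg at h1μ
          have hsimp : lam * ((0:ℕ):ℝ) + lam + μ = lam + μ := by norm_num
          have hG1 : 1 ≤ Real.Gamma (lam * (((0:ℕ):ℝ)+1) + μ) := by
            have : lam * (((0:ℕ):ℝ)+1) + μ = lam + μ := by norm_num
            rw [this]; exact gamma_ge_one h2lm
          have hGμ : Real.Gamma μ ≤ x := by
            have h1 : Real.Gamma (μ + 1) ≤ 1 := by
              apply gamma_le_one <;> norm_num <;> linarith
            rw [Real.Gamma_add_one hμ0.ne'] at h1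
            rw [hxdef, le_div_iff₀ hμ0]; linarith [mul_comm μ (Real.Gamma μ)]
          calc Real.Gamma μ / Real.Gamma (lam * (((0:ℕ):ℝ)+1) + μ)
              ≤ Real.Gamma μ / 1 := by
                apply div_le_div_of_nonneg_left hΓμ.le (by norm_num) hG1
            _ = Real.Gamma μ := by rw [div_one]
            _ ≤ x^(0+1) := by rw [pow_one]; exact hGμ
    -- comparison function
    set g : ℕ → ℝ := fun n => (A * Real.exp (-x)) * (x^(n+1) / (Nat.factorial (n+1) : ℝ)) with hgdef
    have hs1 : Summable (fun n : ℕ => x^(n+1) / (Nat.factorial (n+1) : ℝ)) := by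
      exact (summable_nat_add_iff 1).mpr (Real.summable_pow_div_factorial x)
    have hgs : Summable g := by
      rw [hgdef]; exact hs1.mul_left _
    have hle : ∀ n : ℕ,
        (((n : ℝ) + 2) - α - ((n : ℝ) + 1) * α * β) *
          (Real.Gamma μ / Real.Gamma (lam * ((n : ℝ) + 1) + μ)) * Real.exp (-1 / μ) /
          (Nat.factorial (n + 2) : ℝ) ≤ g n := by
      intro n
      rw [show (-1:ℝ)/μ = -x from harg]
      have := term_bound n (hC0 n) (hCle n) (hr_pos n).le (hrx n) (Real.exp_pos (-x)).le hA0.le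
      calc _ ≤ A * Real.exp (-x) * x^(n+1) / (Nat.factorial (n+1) : ℝ) := this
        _ = g n := by rw [hgdef]; ring
    have htsum_g : ∑' n, g n ≤ 1 - α := by
      have hexp : ∑' n : ℕ, x^n / (Nat.factorial n : ℝ) = Real.exp x := by
        rw [Real.exp_eq_exp_ℝ, NormedSpace.exp_eq_tsum_div]
      have h0 := Summable.tsum_eq_zero_add (Real.summable_pow_div_factorial x)
      rw [hexp] at h0
      simp only [pow_zero, Nat.factorial_zero, Nat.cast_one, div_one] at h0
      have hsum1 : ∑' n : ℕ, x^(n+1) / (Nat.factorial (n+1) : ℝ) = Real.exp x - 1 := by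
        linarith
      rw [hgdef, tsum_mul_left, hsum1]
      have h1 : Real.exp (-x) * Real.exp x = 1 := by rw [← Real.exp_add]; simp
      have h2 : B ≤ A * Real.exp (-x) := by
        nlinarith [mul_le_mul_of_nonneg_right hBA (Real.exp_pos (-x)).le]
      nlinarith [Real.exp_pos (-x)]
    refine ⟨Summable.of_nonneg_of_le hF_nonneg hle hgs, le_trans (Summable.tsum_le_tsum hle
      (Summable.of_nonneg_of_le hF_nonneg hle hgs) hgs) htsum_g⟩
  · -- bad case
    push_neg at hgood
    obtain ⟨hμ1, hlm2⟩ := hgood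
    have hx1 : 1 < x := by rw [hxdef, lt_div_iff₀ hμ0]; linarith
    set c : ℕ → ℝ := fun n => Nat.casesOn n (4/π) (fun m => (171/500:ℝ) * (57/250:ℝ)^m) with hcdef
    set g : ℕ → ℝ := fun n => (A * Real.exp (-x) * x) * c n with hgdef
    have hgeo : Summable (fun m : ℕ => (171/500:ℝ) * (57/250:ℝ)^m) :=
      (summable_geometric_of_lt_one (by norm_num) (by norm_num)).mul_left _
    have hcs : Summable c := by
      rw [← summable_nat_add_iff 1]
      exact hgeo
    have hgs : Summable g := by rw [hgdef]; exact hcs.mul_left _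
    -- pointwise bounds
    have hr0bd : Real.Gamma μ / Real.Gamma (lam * (((0:ℕ):ℝ) + 1) + μ) ≤ x * (4/π) := by
      have heq : lam * (((0:ℕ):ℝ)+1) + μ = lam + μ := by norm_num
      rw [heq]
      have hGμ : Real.Gamma μ ≤ x := by
        have h1 : Real.Gamma (μ + 1) ≤ 1 := by
          apply gamma_le_one <;> norm_num <;> linarith
        rw [Real.Gamma_add_one hμ0.ne'] at h1
        rw [hxdef, le_div_iff₀ hμ0]; linarith [mul_comm μ (Real.Gamma μ)]
      have hpi4 : π/4 ≤ Real.Gamma (lam + μ) := by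
        apply gamma_ge_pi4
        · norm_num; linarith
        · linarith
      have hpi0 : (0:ℝ) < π/4 := by positivity
      calc Real.Gamma μ / Real.Gamma (lam + μ)
          ≤ x / (π/4) := by
            apply div_le_div₀ hx0.le hGμ hpi0 hpi4
        _ = x * (4/π) := by field_simp
    have hrnbd : ∀ m : ℕ, Real.Gamma μ / Real.Gamma (lam * (((m+1:ℕ):ℝ) + 1) + μ)
        ≤ x * (171/250:ℝ)^(m+1) := by
      intro m
      have hm0 : (0:ℝ) ≤ (m:ℝ) := Nat.cast_nonneg m
      have h2 : 2 ≤ μ + (((m+1:ℕ):ℝ)+1) := by push_cast; linarith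
      have hmono : Real.Gamma (μ + (((m+1:ℕ):ℝ)+1)) ≤
          Real.Gamma (lam * (((m+1:ℕ):ℝ) + 1) + μ) := by
        apply gamma_mono2 h2
        push_cast
        nlinarith
      have hprod := gamma_prod2 hμ (m+1)
      have hkey : μ * (1.462:ℝ)^(m+1) * Real.Gamma μ ≤
          Real.Gamma (lam * (((m+1:ℕ):ℝ) + 1) + μ) := le_trans hprod hmono
      have hbp : 0 < Real.Gamma (lam * (((m+1:ℕ):ℝ) + 1) + μ) := hbig_pos (m+1)
      rw [div_le_iff₀ hbp]
      have hstep1 : Real.Gamma μ ≤ x * (1/1.462:ℝ)^(m+1) * (μ * (1.462:ℝ)^(m+1) * Real.Gamma μ) := by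
        have : x * (1/1.462:ℝ)^(m+1) * (μ * (1.462:ℝ)^(m+1) * Real.Gamma μ)
            = (x * μ) * ((1/1.462:ℝ)^(m+1) * (1.462:ℝ)^(m+1)) * Real.Gamma μ := by ring
        rw [this]
        have hxμ : x * μ = 1 := by rw [hxdef]; field_simp
        have hpow : (1/1.462:ℝ)^(m+1) * (1.462:ℝ)^(m+1) = 1 := by
          rw [← mul_pow]; norm_num
        rw [hxμ, hpow]; norm_num
      have hstep2 : x * (1/1.462:ℝ)^(m+1) ≤ x * (171/250:ℝ)^(m+1) := by
        apply mul_le_mul_of_nonneg_left _ hx0.le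
        apply pow_le_pow_left₀ (by norm_num) (by norm_num)
      calc Real.Gamma μ ≤ x * (1/1.462:ℝ)^(m+1) * (μ * (1.462:ℝ)^(m+1) * Real.Gamma μ) := hstep1
        _ ≤ x * (1/1.462:ℝ)^(m+1) * Real.Gamma (lam * (((m+1:ℕ):ℝ) + 1) + μ) := by
            apply mul_le_mul_of_nonneg_left hkey
            positivity
        _ ≤ x * (171/250:ℝ)^(m+1) * Real.Gamma (lam * (((m+1:ℕ):ℝ) + 1) + μ) := by
            apply mul_le_mul_of_nonneg_right hstep2 hbp.le
    have hle : ∀ n : ℕ,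
        (((n : ℝ) + 2) - α - ((n : ℝ) + 1) * α * β) *
          (Real.Gamma μ / Real.Gamma (lam * ((n : ℝ) + 1) + μ)) * Real.exp (-1 / μ) /
          (Nat.factorial (n + 2) : ℝ) ≤ g n := by
      intro n
      rw [show (-1:ℝ)/μ = -x from harg]
      match n with
      | 0 =>
        have := term_bound 0 (hC0 0) (hCle 0) (hr_pos 0).le hr0bd (Real.exp_pos (-x)).le hA0.le
        calc _ ≤ A * Real.exp (-x) * (x * (4/π)) / (Nat.factorial (0+1) : ℝ) := this
          _ = g 0 := by
              rw [hgdef]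
              show A * Real.exp (-x) * (x * (4/π)) / (Nat.factorial 1 : ℝ)
                  = A * Real.exp (-x) * x * (4/π)
              rw [show ((Nat.factorial 1 : ℕ):ℝ) = 1 by norm_num, div_one]; ring
      | Nat.succ m =>
        have hb := term_bound (m+1) (hC0 (m+1)) (hCle (m+1)) (hr_pos (m+1)).le (hrnbd m)
          (Real.exp_pos (-x)).le hA0.le
        refine le_trans hb ?_
        have hfge : (2:ℝ) * 3^m ≤ (Nat.factorial (m+2) : ℝ) := by
          exact_mod_cast two_mul_three_pow_le_factorial m
        have hfp : (0:ℝ) < (Nat.factorial (m+2) : ℝ) := by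
          exact_mod_cast Nat.factorial_pos (m+2)
        have h23 : (0:ℝ) < 2 * 3^m := by positivity
        have hnum : (0:ℝ) ≤ A * Real.exp (-x) * (x * (171/250:ℝ)^(m+1)) := by positivity
        calc A * Real.exp (-x) * (x * (171/250:ℝ)^(m+1)) / (Nat.factorial (m+1+1) : ℝ)
            ≤ A * Real.exp (-x) * (x * (171/250:ℝ)^(m+1)) / (2 * 3^m) := by
              apply div_le_div_of_nonneg_left hnum h23 hfge
          _ = g (m+1) := by
              rw [hgdef]
              show A * Real.exp (-x) * (x * (171/250:ℝ)^(m+1)) / (2 * 3^m)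
                  = A * Real.exp (-x) * x * ((171/500:ℝ) * (57/250:ℝ)^m)
              have h57 : (171/250:ℝ)^m / 3^m = (57/250:ℝ)^m := by
                rw [← div_pow]; norm_num
              rw [← h57, pow_succ]
              field_simp
              ring
    -- tsum bound
    have htsum_c : ∑' n, c n ≤ Real.exp 1 - 1 := by
      have h0 := Summable.tsum_eq_zero_add hcs
      have hshift : ∑' m : ℕ, c (m+1) = (171/500:ℝ) * (1 - 57/250:ℝ)⁻¹ := by
        have : (fun m : ℕ => c (m+1)) = fun m : ℕ => (171/500:ℝ) * (57/250:ℝ)^m := rfl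
        rw [this, tsum_mul_left, tsum_geometric_of_lt_one (by norm_num) (by norm_num)]
      have hc0 : c 0 = 4/π := rfl
      rw [h0, hc0, hshift]
      have h4pi : 4/π ≤ 1.2733 := by
        rw [div_le_iff₀ pi_pos]
        nlinarith [pi_gt_d6]
      have he1 : (2.7182818283:ℝ) < Real.exp 1 := Real.exp_one_gt_d9
      norm_num
      linarith
    have htsum_g : ∑' n, g n ≤ 1 - α := by
      rw [hgdef, tsum_mul_left]
      have hAex : (0:ℝ) ≤ A * Real.exp (-x) * x := by positivity
      have step1 : (A * Real.exp (-x) * x) * (∑' n, c n) ≤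
          (A * Real.exp (-x) * x) * (Real.exp 1 - 1) :=
        mul_le_mul_of_nonneg_left htsum_c hAex
      have hxe : Real.exp 1 * x ≤ Real.exp x := by
        have h1 : x ≤ Real.exp (x-1) := by linarith [Real.add_one_le_exp (x-1)]
        have h2 : Real.exp x = Real.exp 1 * Real.exp (x-1) := by
          rw [← Real.exp_add]; ring_nf
        nlinarith [Real.exp_pos 1]
      have step2 : x * (Real.exp 1 - 1) ≤ Real.exp x - 1 := by nlinarith
      have step3 : (A * Real.exp (-x) * x) * (Real.exp 1 - 1) ≤
          A * Real.exp (-x) * (Real.exp x - 1) := by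
        have := mul_le_mul_of_nonneg_left step2 (by positivity : (0:ℝ) ≤ A * Real.exp (-x))
        calc (A * Real.exp (-x) * x) * (Real.exp 1 - 1)
            = A * Real.exp (-x) * (x * (Real.exp 1 - 1)) := by ring
          _ ≤ A * Real.exp (-x) * (Real.exp x - 1) := this
      have h1 : Real.exp (-x) * Real.exp x = 1 := by rw [← Real.exp_add]; simp
      have h2 : B ≤ A * Real.exp (-x) := by
        nlinarith [mul_le_mul_of_nonneg_right hBA (Real.exp_pos (-x)).le]
      nlinarith [Real.exp_pos (-x)]
    refine ⟨Summable.of_nonneg_of_le hF_nonneg hle hgs, le_trans (Summable.tsum_le_tsum hle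
      (Summable.of_nonneg_of_le hF_nonneg hle hgs) hgs) htsum_g⟩
end

section
/- Let λ ≥ 1, μ > 0.462, α, β ∈ [0,1). If (1-αβ) μ^{-1} e^{1/μ} ≤ 1-α, then Σ_{n≥2} n(n-α-(n-1)αβ) · [Γ(μ)/Γ(λ(n-1)+μ)] · e^{-1/μ}/n! ≤ 1-α, i.e., the function Ĝ_{λ,μ}(z) = z - Σ_{n≥2} [Γ(μ)/Γ(λ(n-1)+μ)] e^{-1/μ}/n! · z^n belongs to TC(α,β). -/
lemma aux_exp_tsum (x : ℝ) : ∑' n : ℕ, x ^ n / (Nat.factorial n : ℝ) = Real.exp x := by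
  rw [Real.exp_eq_exp_ℝ, NormedSpace.exp_eq_tsum_div]

lemma aux_pow_mul_Gamma_le (x : ℝ) (hx : 0 < x) (m : ℕ) :
    x ^ m * Real.Gamma x ≤ Real.Gamma (x + m) := by
  induction m with
  | zero => simp
  | succ m ih =>
    have hxm : (0:ℝ) < x + m := by positivity
    have h1 : Real.Gamma (x + (m+1 : ℕ)) = (x + m) * Real.Gamma (x + m) := by
      rw [show x + ((m+1 : ℕ) : ℝ) = (x + m) + 1 by push_cast; ring,
        Real.Gamma_add_one (ne_of_gt hxm)]
    rw [h1]
    calc x ^ (m+1) * Real.Gamma x = x * (x ^ m * Real.Gamma x) := by ring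
      _ ≤ x * Real.Gamma (x + m) := mul_le_mul_of_nonneg_left ih hx.le
      _ ≤ (x + m) * Real.Gamma (x + m) :=
          mul_le_mul_of_nonneg_right (by linarith [Nat.cast_nonneg (α := ℝ) m])
            (Real.Gamma_pos_of_pos hxm).le

theorem stmt18 (lam μ α β : ℝ) (hlam : 1 ≤ lam) (hμ : 0.462 < μ)
    (hα0 : 0 ≤ α) (hα1 : α < 1) (hβ0 : 0 ≤ β) (hβ1 : β < 1)
    (hcond : (1 - α * β) / μ * Real.exp (1 / μ) ≤ 1 - α) :
    Summable (fun n : ℕ =>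
      ((n : ℝ) + 2) * (((n : ℝ) + 2) - α - ((n : ℝ) + 1) * α * β) *
        (Real.Gamma μ / Real.Gamma (lam * ((n : ℝ) + 1) + μ)) * Real.exp (-1 / μ) /
        (Nat.factorial (n + 2) : ℝ)) ∧
    ∑' n : ℕ,
      ((n : ℝ) + 2) * (((n : ℝ) + 2) - α - ((n : ℝ) + 1) * α * β) *
        (Real.Gamma μ / Real.Gamma (lam * ((n : ℝ) + 1) + μ)) * Real.exp (-1 / μ) /
        (Nat.factorial (n + 2) : ℝ) ≤ 1 - α := by
  have hμ0 : (0:ℝ) < μ := by linarith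
  have hαβ : α * β ≤ α := by nlinarith
  have h1αβ : (0:ℝ) < 1 - α * β := by nlinarith
  have h1α : (0:ℝ) < 1 - α := by linarith
  -- μ > 1
  have h2 : ((1 - α * β) * Real.exp (1 / μ)) / μ ≤ 1 - α * β := by
    rw [← div_mul_eq_mul_div]; linarith
  have h3 : (1 - α * β) * Real.exp (1 / μ) ≤ (1 - α * β) * μ := (div_le_iff₀ hμ0).mp h2
  have hexpμ : Real.exp (1 / μ) ≤ μ := (mul_le_mul_iff_right₀ h1αβ).mp h3
  have hμ1 : 1 < μ := by
    have := Real.add_one_le_exp (1 / μ)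
    have h4 : (0:ℝ) < 1 / μ := by positivity
    linarith
  have hΓμ : 0 < Real.Gamma μ := Real.Gamma_pos_of_pos hμ0
  have hL0 : ∀ n : ℕ, (0:ℝ) < lam * ((n:ℝ) + 1) + μ := by
    intro n
    nlinarith [Nat.cast_nonneg (α := ℝ) n]
  have hΓL : ∀ n : ℕ, 0 < Real.Gamma (lam * ((n:ℝ) + 1) + μ) :=
    fun n => Real.Gamma_pos_of_pos (hL0 n)
  -- ratio bound
  have hrat : ∀ n : ℕ, Real.Gamma μ / Real.Gamma (lam * ((n:ℝ) + 1) + μ) ≤ (1/μ)^(n+1) := by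
    intro n
    have hn0 : (0:ℝ) ≤ (n:ℝ) := Nat.cast_nonneg n
    have hmono : Real.Gamma (μ + ((n+1 : ℕ) : ℝ)) ≤ Real.Gamma (lam * ((n:ℝ) + 1) + μ) := by
      apply Real.Gamma_strictMonoOn_Ici.monotoneOn
      · simp only [Set.mem_Ici]; push_cast; linarith
      · simp only [Set.mem_Ici]; nlinarith
      · push_cast; nlinarith
    have hpow := aux_pow_mul_Gamma_le μ hμ0 (n+1)
    rw [div_le_iff₀ (hΓL n)]
    calc Real.Gamma μ = (1/μ)^(n+1) * (μ^(n+1) * Real.Gamma μ) := by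
          rw [one_div, inv_pow, inv_mul_cancel_left₀ (pow_ne_zero _ hμ0.ne')]
      _ ≤ (1/μ)^(n+1) * Real.Gamma (lam * ((n:ℝ) + 1) + μ) :=
          mul_le_mul_of_nonneg_left (hpow.trans hmono) (by positivity)
  -- coefficient identity
  have hcoef : ∀ n : ℕ, ((n:ℝ)+2) * (((n:ℝ)+2) - α - ((n:ℝ)+1)*α*β) / (Nat.factorial (n+2) : ℝ)
      = (1-α*β)/(Nat.factorial n : ℝ) + (1-α)/(Nat.factorial (n+1) : ℝ) := by
    intro n
    have hfac2 : (Nat.factorial (n+2) : ℝ) = ((n:ℝ)+2)*((n:ℝ)+1)*(Nat.factorial n : ℝ) := by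
      rw [Nat.factorial_succ, Nat.factorial_succ]; push_cast; ring
    have hfac1 : (Nat.factorial (n+1) : ℝ) = ((n:ℝ)+1)*(Nat.factorial n : ℝ) := by
      rw [Nat.factorial_succ]; push_cast; ring
    have h0 : (Nat.factorial n : ℝ) ≠ 0 := Nat.cast_ne_zero.mpr (Nat.factorial_ne_zero n)
    have hn1 : ((n:ℝ)+1) ≠ 0 := by positivity
    have hn2 : ((n:ℝ)+2) ≠ 0 := by positivity
    rw [hfac2, hfac1]
    field_simp
    ring
  set f : ℕ → ℝ := fun n =>
      ((n : ℝ) + 2) * (((n : ℝ) + 2) - α - ((n : ℝ) + 1) * α * β) *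
        (Real.Gamma μ / Real.Gamma (lam * ((n : ℝ) + 1) + μ)) * Real.exp (-1 / μ) /
        (Nat.factorial (n + 2) : ℝ) with hfdef
  set g : ℕ → ℝ := fun n =>
      ((1-α*β) * ((1/μ)^(n+1)/(Nat.factorial n : ℝ))
        + (1-α) * ((1/μ)^(n+1)/(Nat.factorial (n+1) : ℝ))) * Real.exp (-1/μ) with hgdef
  have hfeq : ∀ n, f n = (((n:ℝ)+2) * (((n:ℝ)+2) - α - ((n:ℝ)+1)*α*β) / (Nat.factorial (n+2) : ℝ))
      * (Real.Gamma μ / Real.Gamma (lam * ((n:ℝ) + 1) + μ)) * Real.exp (-1/μ) := by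
    intro n; simp only [hfdef]; ring
  have hcnn : ∀ n : ℕ, (0:ℝ) ≤ (1-α*β)/(Nat.factorial n : ℝ) + (1-α)/(Nat.factorial (n+1) : ℝ) := by
    intro n; positivity
  have hf0 : ∀ n, 0 ≤ f n := by
    intro n
    rw [hfeq n, hcoef n]
    exact mul_nonneg (mul_nonneg (hcnn n) (div_nonneg hΓμ.le (hΓL n).le)) (Real.exp_pos _).le
  have hfg : ∀ n, f n ≤ g n := by
    intro n
    rw [hfeq n, hcoef n]
    calc ((1-α*β)/(Nat.factorial n : ℝ) + (1-α)/(Nat.factorial (n+1) : ℝ))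
          * (Real.Gamma μ / Real.Gamma (lam * ((n:ℝ) + 1) + μ)) * Real.exp (-1/μ)
        ≤ ((1-α*β)/(Nat.factorial n : ℝ) + (1-α)/(Nat.factorial (n+1) : ℝ))
          * (1/μ)^(n+1) * Real.exp (-1/μ) :=
          mul_le_mul_of_nonneg_right
            (mul_le_mul_of_nonneg_left (hrat n) (hcnn n)) (Real.exp_pos _).le
      _ = g n := by simp only [hgdef]; ring
  -- summability of pieces
  have hs1 : Summable (fun n : ℕ => (1/μ)^(n+1)/(Nat.factorial n : ℝ)) := by
    have h := (Real.summable_pow_div_factorial (1/μ)).mul_left (1/μ)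
    refine h.congr fun n => ?_
    rw [pow_succ']; ring
  have hs2 : Summable (fun n : ℕ => (1/μ)^(n+1)/(Nat.factorial (n+1) : ℝ)) :=
    (summable_nat_add_iff (f := fun k : ℕ => (1/μ)^k/(Nat.factorial k : ℝ)) 1).mpr
      (Real.summable_pow_div_factorial (1/μ))
  have hgsum : Summable g :=
    (((hs1.mul_left (1-α*β)).add (hs2.mul_left (1-α))).mul_right (Real.exp (-1/μ)))
  have hfsum : Summable f := Summable.of_nonneg_of_le hf0 hfg hgsum
  refine ⟨hfsum, ?_⟩
  have ht1 : ∑' n : ℕ, (1/μ)^(n+1)/(Nat.factorial n : ℝ) = (1/μ) * Real.exp (1/μ) := by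
    rw [← aux_exp_tsum (1/μ), ← tsum_mul_left]
    congr 1; funext n; rw [pow_succ']; ring
  have ht2 : ∑' n : ℕ, (1/μ)^(n+1)/(Nat.factorial (n+1) : ℝ) = Real.exp (1/μ) - 1 := by
    have h0 := Real.summable_pow_div_factorial (1/μ)
    have he := Summable.tsum_eq_zero_add h0
    rw [aux_exp_tsum] at he
    simp only [pow_zero, Nat.factorial_zero, Nat.cast_one, div_one] at he
    linarith [he.symm.le, he.le]
  have htg : ∑' n, g n = ((1-α*β) * ((1/μ) * Real.exp (1/μ))
      + (1-α) * (Real.exp (1/μ) - 1)) * Real.exp (-1/μ) := by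
    simp only [hgdef]
    rw [tsum_mul_right, Summable.tsum_add (hs1.mul_left (1-α*β)) (hs2.mul_left (1-α)),
      tsum_mul_left, tsum_mul_left, ht1, ht2]
  have hPE : Real.exp (1/μ) * Real.exp (-1/μ) = 1 := by
    rw [← Real.exp_add]; norm_num [neg_div]
  have key : (1-α*β) * (1/μ) ≤ (1-α) * Real.exp (-1/μ) := by
    have h := mul_le_mul_of_nonneg_right hcond (Real.exp_pos (-1/μ)).le
    have e1 : (1-α*β)/μ * Real.exp (1/μ) * Real.exp (-1/μ) = (1-α*β)*(1/μ) := by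
      rw [mul_assoc, hPE, mul_one, div_eq_mul_one_div]
    rw [e1] at h
    exact h
  have hfinal : ∑' n, g n ≤ 1 - α := by
    rw [htg]
    have expand : ((1-α*β)*(1/μ*Real.exp (1/μ)) + (1-α)*(Real.exp (1/μ)-1)) * Real.exp (-1/μ)
        = (1-α*β)*(1/μ)*(Real.exp (1/μ)*Real.exp (-1/μ))
          + (1-α)*(Real.exp (1/μ)*Real.exp (-1/μ)) - (1-α)*Real.exp (-1/μ) := by ring
    rw [expand, hPE]
    linarith
  exact (Summable.tsum_le_tsum hfg hfsum hgsum).trans hfinal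
end
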